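/- Let R be a 2-torsion free σ-prime ring and d a nonzero derivation of R. If d([x,y]) = 0 for all x, y ∈ R, then R is commutative. -/
import Mathlib


theorem stmt15 (R : Type*) [Ring R]
  (σ : R → R)
  (hσadd : ∀ x y : R, σ (x + y) = σ x + σ y)
  (hσmul : ∀ x y : R, σ (x * y) = σ y * σ x)
  (hσinv : ∀ x : R, σ (σ x) = x)
  (htor : ∀ x : R, x + x = 0 → x = 0)
  (hsp : ∀ a b : R, (∀ r : R, a * r * b = 0) → (∀ r : R, a * r * σ b = 0) → a = 0 ∨ b = 0)
  (d : R → R)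
  (hdadd : ∀ x y : R, d (x + y) = d x + d y)
  (hdmul : ∀ x y : R, d (x * y) = d x * y + x * d y)
  (hdnz : ∃ x : R, d x ≠ 0)
  (h : ∀ x y : R, d (x * y - y * x) = 0) :
    ∀ x y : R, x * y = y * x := by
  -- σ 0 = 0
  have hσ0 : σ 0 = 0 := by
    have h0 := hσadd 0 0
    rw [add_zero] at h0
    have := (left_eq_add).mp h0
    exact this
  -- σ of negation and subtraction
  have hσneg : ∀ a : R, σ (-a) = -σ a := by
    intro a
    have h1 := hσadd a (-a)
    rw [add_neg_cancel, hσ0] at h1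
    exact eq_neg_of_add_eq_zero_right h1.symm
  have hσsub : ∀ a b : R, σ (a - b) = σ a - σ b := by
    intro a b
    rw [sub_eq_add_neg, hσadd, hσneg, sub_eq_add_neg]
  -- σ-prime implies semiprime
  have semi : ∀ a : R, (∀ r : R, a * r * a = 0) → a = 0 := by
    intro a ha
    by_contra hne
    have h2 : ∀ t : R, a * t * σ a = 0 := by
      intro t
      have hb1 : ∀ r : R, a * r * (a * t * σ a) = 0 := by
        intro r
        have e : a * r * (a * t * σ a) = (a * r * a) * t * σ a := by noncomm_ring
        rw [e, ha, zero_mul, zero_mul]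
      have hb2 : ∀ r : R, a * r * σ (a * t * σ a) = 0 := by
        intro r
        have e : σ (a * t * σ a) = a * σ t * σ a := by
          rw [hσmul, hσmul, hσinv, mul_assoc]
        rw [e]
        have e2 : a * r * (a * σ t * σ a) = (a * r * a) * σ t * σ a := by noncomm_ring
        rw [e2, ha, zero_mul, zero_mul]
      rcases hsp a (a * t * σ a) hb1 hb2 with h' | h'
      · exact absurd h' hne
      · exact h'
    have h3 : ∀ r : R, a * r * σ (σ a) = 0 := by
      intro r; rw [hσinv]; exact ha r
    rcases hsp a (σ a) h2 h3 with h' | h'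
    · exact hne h'
    · apply hne
      have := congrArg σ h'
      rw [hσinv, hσ0] at this
      exact this
  -- d(x) * [x,y] = 0
  have hc1 : ∀ x y : R, d x * (x * y - y * x) = 0 := by
    intro x y
    have e1 : x * (x * y) - (x * y) * x = x * (x * y - y * x) := by noncomm_ring
    have e2 := h x (x * y)
    rw [e1, hdmul, h x y, mul_zero, add_zero] at e2
    exact e2
  -- [x,y] * d(x) = 0
  have hc1' : ∀ x y : R, (x * y - y * x) * d x = 0 := by
    intro x y
    have e1 : x * (y * x) - (y * x) * x = (x * y - y * x) * x := by noncomm_ring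
    have e2 := h x (y * x)
    rw [e1, hdmul, h x y, zero_mul, zero_add] at e2
    exact e2
  -- d(x) * y * [x,z] = 0
  have A : ∀ x y z : R, d x * y * (x * z - z * x) = 0 := by
    intro x y z
    have e : d x * y * (x * z - z * x)
        = d x * (x * (y * z) - (y * z) * x) - (d x * (x * y - y * x)) * z := by
      noncomm_ring
    rw [e, hc1 x (y * z), hc1 x y, zero_mul, sub_zero]
  -- [x,z] * y * d(x) = 0
  have B : ∀ x y z : R, (x * z - z * x) * y * d x = 0 := by
    intro x y z
    have e : (x * z - z * x) * y * d x
        = (x * (z * y) - (z * y) * x) * d x - z * ((x * y - y * x) * d x) := by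
      noncomm_ring
    rw [e, hc1' x (z * y), hc1' x y, mul_zero, sub_zero]
  -- bilinearization
  have key : ∀ x w z r : R,
      d x * r * (w * z - z * w) + d w * r * (x * z - z * x) = 0 := by
    intro x w z r
    have e : d x * r * (w * z - z * w) + d w * r * (x * z - z * x)
        = (d x + d w) * r * ((x + w) * z - z * (x + w))
          - d x * r * (x * z - z * x) - d w * r * (w * z - z * w) := by
      noncomm_ring
    rw [e, ← hdadd, A (x + w) r z, A x r z, A w r z, sub_zero, sub_zero]
  -- c R c = 0 for c = d x * r * [w,z]
  have cRc : ∀ x w z r t : R,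
      d x * r * (w * z - z * w) * t * (d x * r * (w * z - z * w)) = 0 := by
    intro x w z r t
    have hc2 : d x * r * (w * z - z * w) = -(d w * r * (x * z - z * x)) :=
      eq_neg_of_add_eq_zero_left (key x w z r)
    nth_rewrite 2 [hc2]
    have e : d x * r * (w * z - z * w) * t * (-(d w * r * (x * z - z * x)))
        = -((d x * (r * ((w * z - z * w) * t * d w))) * (r * (x * z - z * x))) := by
      noncomm_ring
    rw [e, B w t z, mul_zero, mul_zero, zero_mul, neg_zero]
  -- hence d x * r * [w,z] = 0 for all x,w,z,r
  have C : ∀ x w z r : R, d x * r * (w * z - z * w) = 0 := by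
    intro x w z r
    exact semi _ (fun t => cRc x w z r t)
  -- conclude
  obtain ⟨x0, hx0⟩ := hdnz
  intro w z
  have farg2 : ∀ r : R, d x0 * r * σ (w * z - z * w) = 0 := by
    intro r
    rw [hσsub, hσmul, hσmul]
    exact C x0 (σ z) (σ w) r
  rcases hsp (d x0) (w * z - z * w) (fun r => C x0 w z r) farg2 with h' | h'
  · exact absurd h' hx0
  · exact sub_eq_zero.mp h'
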